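/- Let φ : ℝ^n → ℝ^h be a monomial basis-function vector, i.e., φ_h̄(x) = f̄_h̄ · ∏_{j=1}^n x_j^{f_{j,h̄}} with f̄_h̄ ∈ ℝ\{0} and exponents f_{j,h̄} ∈ ℕ for each h̄ ∈ {1,…,h}. Let x : ℝ → ℝ^n be continuously differentiable and let ν_1,…,ν_n be nonzero reals; define x̄(t) = (ν_1·x_1(t), …, ν_n·x_n(t)). If the function t ↦ (d/dt) φ(x(t)) is persistently exciting on [t₀, ∞), then the function t ↦ (d/dt) φ(x̄(t)) is persistently exciting on [t₀, ∞). -/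

import Mathlib

open MeasureTheory Matrix

/-- The matrix `∫_t^{t+T} σ(τ)σ(τ)ᵀ dτ`, computed entrywise. -/
noncomputable def peMatrix {h : ℕ} (σ : ℝ → Fin h → ℝ) (t T : ℝ) : Matrix (Fin h) (Fin h) ℝ :=
  Matrix.of fun i j => ∫ τ in t..(t + T), σ τ i * σ τ j

/-- `σ` is persistently exciting on `[t₀, ∞)`: there are `α, T > 0` such that
`∫_t^{t+T} σσᵀ dτ − α·I` is positive semidefinite for all `t ≥ t₀`. -/
def IsPE {h : ℕ} (σ : ℝ → Fin h → ℝ) (t₀ : ℝ) : Prop :=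
  ∃ α T : ℝ, 0 < α ∧ 0 < T ∧ ∀ t ≥ t₀,
    (peMatrix σ t T - α • (1 : Matrix (Fin h) (Fin h) ℝ)).PosSemidef

lemma quad_form_sub_smul_one {h : ℕ} (A : Matrix (Fin h) (Fin h) ℝ) (s : ℝ) (v : Fin h → ℝ) :
    v ⬝ᵥ (A - s • 1).mulVec v = v ⬝ᵥ A.mulVec v - s * ∑ i, v i ^ 2 := by
  rw [Matrix.sub_mulVec, Matrix.smul_mulVec, Matrix.one_mulVec, dotProduct_sub,
    dotProduct_smul]
  simp [dotProduct, sq, Finset.mul_sum, smul_eq_mul]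

/-- Scaling preserves PE. -/
lemma isPE_scale {h : ℕ} (σ : ℝ → Fin h → ℝ) (c : Fin h → ℝ) (hc : ∀ i, c i ≠ 0)
    (t₀ : ℝ) (hPE : IsPE σ t₀) : IsPE (fun t i => c i * σ t i) t₀ := by
  obtain ⟨α, T, hα, hT, hPSD⟩ := hPE
  have hε : ∃ ε : ℝ, 0 < ε ∧ ∀ i, ε ≤ (c i) ^ 2 := by
    rcases isEmpty_or_nonempty (Fin h) with hE | hN
    · exact ⟨1, one_pos, fun i => (hE.elim i)⟩
    · refine ⟨Finset.univ.inf' Finset.univ_nonempty (fun i => (c i) ^ 2), ?_, ?_⟩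
      · rw [Finset.lt_inf'_iff]
        intro i _
        exact (sq_nonneg (c i)).lt_of_ne' (pow_ne_zero 2 (hc i))
      · intro i
        exact Finset.inf'_le _ (Finset.mem_univ i)
  obtain ⟨ε, hε0, hεle⟩ := hε
  refine ⟨ε * α, T, by positivity, hT, fun t ht => ?_⟩
  have hM := hPSD t ht
  set M := peMatrix σ t T with hMdef
  set N := peMatrix (fun t i => c i * σ t i) t T with hNdef
  have hN : ∀ i j, N i j = c i * c j * M i j := by
    intro i j
    have : (fun τ => (c i * σ τ i) * (c j * σ τ j)) = fun τ => (c i * c j) * (σ τ i * σ τ j) := by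
      funext τ; ring
    simp only [hNdef, hMdef, peMatrix, Matrix.of_apply]
    rw [this, intervalIntegral.integral_const_mul]
  refine Matrix.posSemidef_iff_dotProduct_mulVec.mpr ⟨?_, ?_⟩
  · -- Hermitian
    have hMsym : ∀ i j, M i j = M j i := by
      intro i j
      simp only [hMdef, peMatrix, Matrix.of_apply]
      congr 1; funext τ; ring
    ext i j
    simp only [Matrix.conjTranspose_apply, Matrix.sub_apply, Matrix.smul_apply, Matrix.one_apply,
      star_trivial, smul_eq_mul]
    rw [hN i j, hN j i, hMsym j i]
    by_cases hij : i = j <;> simp [hij, eq_comm, mul_comm]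
  · intro y
    have hq := hM.dotProduct_mulVec_nonneg (fun i => c i * y i)
    simp only [star_trivial] at hq ⊢
    set z : Fin h → ℝ := fun i => c i * y i with hz
    rw [quad_form_sub_smul_one] at hq ⊢
    have hqq : y ⬝ᵥ N.mulVec y = z ⬝ᵥ M.mulVec z := by
      simp only [dotProduct, Matrix.mulVec, Finset.mul_sum]
      apply Finset.sum_congr rfl
      intro i _
      apply Finset.sum_congr rfl
      intro j _
      rw [hN i j]
      simp only [hz]
      ring
    have hsum : (ε * α) * ∑ i, y i ^ 2 ≤ α * ∑ i, z i ^ 2 := by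
      rw [Finset.mul_sum, Finset.mul_sum]
      apply Finset.sum_le_sum
      intro i _
      have h1 := hεle i
      have h2 := sq_nonneg (y i)
      simp only [hz, mul_pow]
      nlinarith [mul_nonneg (mul_nonneg hα.le (sub_nonneg.mpr h1)) h2]
    rw [hqq]
    linarith

/-- Lemma 7 of the paper: componentwise nonzero scaling of the state
trajectory preserves persistent excitation of the monomial regressor derivative. -/
theorem stmt_6 (n h : ℕ) (fbar : Fin h → ℝ) (hfbar : ∀ i, fbar i ≠ 0)
    (f : Fin h → Fin n → ℕ) (x : ℝ → Fin n → ℝ) (hx : ContDiff ℝ 1 x)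
    (ν : Fin n → ℝ) (hν : ∀ j, ν j ≠ 0) (t₀ : ℝ)
    (hPE : IsPE (fun t i => deriv (fun s => fbar i * ∏ j : Fin n, (x s j) ^ f i j) t) t₀) :
    IsPE (fun t i => deriv (fun s => fbar i * ∏ j : Fin n, (ν j * x s j) ^ f i j) t) t₀ := by
  set c : Fin h → ℝ := fun i => ∏ j, ν j ^ f i j with hcdef
  have hc : ∀ i, c i ≠ 0 := fun i =>
    Finset.prod_ne_zero_iff.mpr fun j _ => pow_ne_zero _ (hν j)
  have hfun : (fun t i => deriv (fun s => fbar i * ∏ j : Fin n, (ν j * x s j) ^ f i j) t)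
      = fun t i => c i * deriv (fun s => fbar i * ∏ j : Fin n, (x s j) ^ f i j) t := by
    funext t i
    have heq : (fun s => fbar i * ∏ j : Fin n, (ν j * x s j) ^ f i j)
        = fun s => c i * (fbar i * ∏ j : Fin n, (x s j) ^ f i j) := by
      funext s
      simp only [hcdef, mul_pow, Finset.prod_mul_distrib]
      ring
    rw [heq, deriv_const_mul_field]
  rw [hfun]
  exact isPE_scale _ c hc t₀ hPE
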